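/- The number of vectors a ∈ [k]^n with Δ(a) lying in the refinement interval [Φ_c, Φ_f], where Φ_c has j blocks and Φ_f is a length-n refinement of Φ_c, equals C(k+n−j, n). -/

import Mathlib

/-- A scheduling problem on `n` items: a boolean formula over atoms `x i ≤ x j`. -/
inductive SForm (n : ℕ) : Type
  | atom (i j : Fin n) : SForm n
  | not (φ : SForm n) : SForm n
  | and (φ ψ : SForm n) : SForm n
  | or (φ ψ : SForm n) : SForm n

/-- Evaluation of a scheduling formula at an assignment `a : Fin n → ℕ`. -/
def SForm.eval {n : ℕ} : SForm n → (Fin n → ℕ) → Bool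
  | .atom i j, a => decide (a i ≤ a j)
  | .not φ, a => !(φ.eval a)
  | .and φ ψ, a => φ.eval a && ψ.eval a
  | .or φ ψ, a => φ.eval a || ψ.eval a

/-- `schedCount S k` = number of vectors `a ∈ [k]^n` (entries in `{1,…,k}`) solving `S`. -/
def schedCount {n : ℕ} (S : SForm n) (k : ℕ) : ℕ :=
  ((Fintype.piFinset fun _ : Fin n => Finset.Icc 1 k).filter
    fun a => S.eval a = true).card

/-- An ordered set partition of `[n]`. -/
structure OSP (n : ℕ) where
  blocks : List (Finset (Fin n))
  nonempty : ∀ B ∈ blocks, B.Nonempty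
  pairwiseDisjoint : blocks.Pairwise Disjoint
  cover : ∀ i : Fin n, ∃ B ∈ blocks, i ∈ B

/-- Number of blocks of an ordered set partition. -/
def OSP.length {n : ℕ} (Φ : OSP n) : ℕ := Φ.blocks.length

/-- `Φ.delta a` : the order class of `a` is `Φ`, i.e. coordinates of `a` are constant on each
block and ordered according to the block order. -/
def OSP.delta {n : ℕ} (Φ : OSP n) (a : Fin n → ℕ) : Prop :=
  ∃ idx : Fin n → Fin Φ.blocks.length,
    (∀ i, i ∈ Φ.blocks.get (idx i)) ∧
    (∀ i j, a i ≤ a j ↔ (idx i : ℕ) ≤ (idx j : ℕ))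

/-- An ordered set partition `Φ` solves `S` if every vector with order class `Φ` satisfies `S`. -/
def OSP.solves {n : ℕ} (Φ : OSP n) (S : SForm n) : Prop :=
  ∀ a : Fin n → ℕ, Φ.delta a → S.eval a = true

/-- `Ψ.refines Φ` : `Φ` is obtained from `Ψ` by merging consecutive blocks. -/
def OSP.refines {n : ℕ} (Ψ Φ : OSP n) : Prop :=
  ∃ g : Fin Ψ.blocks.length → Fin Φ.blocks.length,
    Monotone g ∧
    ∀ l : Fin Φ.blocks.length,
      Φ.blocks.get l =
        (Finset.univ.filter fun m => g m = l).biUnion fun m => Ψ.blocks.get m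

/-- One step of directed refinement: `F` is obtained from `C` by splitting one block into two
adjacent blocks, every element of the first being less than every element of the second. -/
def dirCov {n : ℕ} (C F : OSP n) : Prop :=
  ∃ (L R : List (Finset (Fin n))) (B₁ B₂ : Finset (Fin n)),
    F.blocks = L ++ B₁ :: B₂ :: R ∧
    C.blocks = L ++ (B₁ ∪ B₂) :: R ∧
    ∀ x ∈ B₁, ∀ y ∈ B₂, x < y

/-- `dirRef C F` : `F` is a directed refinement of `C` (`C ⪯ F`). -/
def dirRef {n : ℕ} : OSP n → OSP n → Prop := Relation.ReflTransGen dirCov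

/-- the number of `a ∈ [k]^n` whose order class lies in the refinement interval
`[Φc, Φf]`, where `Φc` has `j` blocks and `Φf` is a length-`n` refinement of `Φc`,
equals `C(k+n−j, n)`. -/

lemma get_eq_of_mem_blocks {α : Type*} {L : List (Finset α)} (h : L.Pairwise Disjoint)
    {l l' : Fin L.length} {x : α} (hx : x ∈ L.get l) (hx' : x ∈ L.get l') : l = l' := by
  rcases lt_trichotomy l l' with hlt | he | hlt
  · exact absurd hx' (Finset.disjoint_left.mp (List.pairwise_iff_get.mp h l l' hlt) hx)
  · exact he
  · exact absurd hx (Finset.disjoint_left.mp (List.pairwise_iff_get.mp h l' l hlt) hx')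

lemma step_le {N : ℕ} (u v : Fin N → ℕ)
    (hstep : ∀ (i : ℕ) (h : i + 1 < N),
      u ⟨i, Nat.lt_of_succ_lt h⟩ + v ⟨i+1, h⟩ ≤ u ⟨i+1, h⟩ + v ⟨i, Nat.lt_of_succ_lt h⟩) :
    ∀ p q : Fin N, p ≤ q → u p + v q ≤ u q + v p := by
  intro p q hpq
  have key : ∀ qv : ℕ, (p : ℕ) ≤ qv → ∀ h : qv < N, u p + v ⟨qv, h⟩ ≤ u ⟨qv, h⟩ + v p := by
    intro qv
    induction qv with
    | zero =>
      intro hp h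
      have hp0 : p = ⟨0, h⟩ := Fin.ext (Nat.le_zero.mp hp)
      rw [hp0]
    | succ m ih =>
      intro hp h
      rcases Nat.lt_or_ge (p : ℕ) (m+1) with hlt | hge
      · have hm : (p:ℕ) ≤ m := Nat.lt_succ_iff.mp hlt
        have h1 := ih hm (Nat.lt_of_succ_lt h)
        have h2 := hstep m h
        omega
      · have hp1 : p = ⟨m+1, h⟩ := Fin.ext (le_antisymm hp hge)
        rw [hp1]
  have := key (q : ℕ) hpq q.isLt
  simpa using this


lemma exists_deltaOSP {n : ℕ} (a : Fin n → ℕ) : ∃ Φ : OSP n, Φ.delta a := by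
  classical
  set V : List ℕ := (Finset.univ.image a).sort (· ≤ ·) with hV
  have hsortlt : V.SortedLT := Finset.sortedLT_sort _
  have hmemV : ∀ i : Fin n, a i ∈ V := by
    intro i
    rw [hV, Finset.mem_sort]
    exact Finset.mem_image_of_mem a (Finset.mem_univ i)
  refine ⟨⟨V.map (fun v => Finset.univ.filter (fun i => a i = v)), ?_, ?_, ?_⟩, ?_⟩
  · intro B hB
    rcases List.mem_map.mp hB with ⟨v, hv, rfl⟩
    rw [hV, Finset.mem_sort] at hv
    rcases Finset.mem_image.mp hv with ⟨i, _, rfl⟩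
    exact ⟨i, by simp⟩
  · refine List.Pairwise.map _ ?_ (Finset.sort_nodup _ _)
    intro v w hvw
    rw [Finset.disjoint_left]
    intro x hx hx'
    simp only [Finset.mem_filter] at hx hx'
    exact hvw (hx.2 ▸ hx'.2)
  · intro i
    exact ⟨Finset.univ.filter (fun x => a x = a i),
      List.mem_map.mpr ⟨a i, hmemV i, rfl⟩, by simp⟩
  · have hlen : (V.map (fun v => Finset.univ.filter (fun i => a i = v))).length = V.length :=
      List.length_map _
    refine ⟨fun i => ⟨V.idxOf (a i), by rw [hlen]; exact List.idxOf_lt_length_iff.mpr (hmemV i)⟩,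
      ?_, ?_⟩
    · intro i
      simp only [List.get_eq_getElem, List.getElem_map]
      simp
    · intro i j
      have hgi : V[V.idxOf (a i)]'(List.idxOf_lt_length_iff.mpr (hmemV i)) = a i :=
        List.getElem_idxOf _
      have hgj : V[V.idxOf (a j)]'(List.idxOf_lt_length_iff.mpr (hmemV j)) = a j :=
        List.getElem_idxOf _
      have := hsortlt.strictMono_get.le_iff_le
        (a := ⟨V.idxOf (a i), List.idxOf_lt_length_iff.mpr (hmemV i)⟩)
        (b := ⟨V.idxOf (a j), List.idxOf_lt_length_iff.mpr (hmemV j)⟩)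
      simp only [List.get_eq_getElem, hgi, hgj, Fin.le_def] at this
      simpa using this

lemma count_main {N J k : ℕ} (g : Fin N → Fin J) (hg : Monotone g)
    (hgs : Function.Surjective g) :
    {b : Fin N → ℕ | (∀ p, b p ∈ Finset.Icc 1 k) ∧ (∀ p q : Fin N, p ≤ q → b p ≤ b q) ∧
      (∀ p q : Fin N, g p < g q → b p < b q)}.ncard = (k + N - J).choose N := by
  classical
  -- step property of g
  have hstepg : ∀ (i : ℕ) (h : i + 1 < N),
      (g ⟨i+1, h⟩ : ℕ) ≤ (g ⟨i, Nat.lt_of_succ_lt h⟩ : ℕ) + 1 := by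
    intro i h
    by_contra hcon
    push_neg at hcon
    have hJ : (g ⟨i, Nat.lt_of_succ_lt h⟩ : ℕ) + 1 < J := lt_trans hcon (g _).isLt
    obtain ⟨m, hm⟩ := hgs ⟨(g ⟨i, Nat.lt_of_succ_lt h⟩ : ℕ) + 1, hJ⟩
    have h1 : g ⟨i, Nat.lt_of_succ_lt h⟩ < g m := by
      rw [hm]; rw [Fin.lt_def]; simp
    have h2 : (⟨i, Nat.lt_of_succ_lt h⟩ : Fin N) < m := by
      by_contra hc
      push_neg at hc
      exact absurd (hg hc) (not_le_of_gt h1)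
    have h3 : (⟨i+1, h⟩ : Fin N) ≤ m := by
      rw [Fin.le_def]; rw [Fin.lt_def] at h2; simpa using h2
    have := hg h3
    rw [hm, Fin.le_def] at this
    simp at this
    omega
  set A : Finset (Fin N → ℕ) :=
    (Fintype.piFinset fun _ : Fin N => Finset.Icc 1 k).filter
      (fun b => (∀ p q : Fin N, p ≤ q → b p ≤ b q) ∧ (∀ p q : Fin N, g p < g q → b p < b q))
    with hA
  have hmemA : ∀ b : Fin N → ℕ, b ∈ A ↔ (∀ p, b p ∈ Finset.Icc 1 k) ∧
      (∀ p q : Fin N, p ≤ q → b p ≤ b q) ∧ (∀ p q : Fin N, g p < g q → b p < b q) := by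
    intro b
    rw [hA, Finset.mem_filter, Fintype.mem_piFinset]
  have hset : {b : Fin N → ℕ | (∀ p, b p ∈ Finset.Icc 1 k) ∧ (∀ p q : Fin N, p ≤ q → b p ≤ b q) ∧
      (∀ p q : Fin N, g p < g q → b p < b q)} = ↑A := by
    ext b
    rw [Set.mem_setOf_eq, Finset.mem_coe, hmemA]
  rw [hset, Set.ncard_coe_finset]
  -- facts about elements of A
  have hfacts : ∀ b : Fin N → ℕ, b ∈ A →
      (∀ p q : Fin N, p ≤ q → b p + (g q : ℕ) ≤ b q + (g p : ℕ)) ∧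
      (∀ p : Fin N, (g p : ℕ) + 1 ≤ b p) ∧
      (∀ p : Fin N, b p + J ≤ k + (g p : ℕ) + 1) := by
    intro b hb
    rw [hmemA] at hb
    obtain ⟨hb1, hb2, hb3⟩ := hb
    have F1 : ∀ p q : Fin N, p ≤ q → b p + (g q : ℕ) ≤ b q + (g p : ℕ) := by
      refine step_le b (fun p => (g p : ℕ)) ?_
      intro i h
      rcases lt_or_ge (g ⟨i, Nat.lt_of_succ_lt h⟩) (g ⟨i+1, h⟩) with hlt | hle
      · have := hb3 _ _ hlt
        have := hstepg i h
        omega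
      · have : b ⟨i, Nat.lt_of_succ_lt h⟩ ≤ b ⟨i+1, h⟩ := by
          refine hb2 _ _ ?_
          rw [Fin.le_def]; simp
        rw [Fin.le_def] at hle
        omega
    refine ⟨F1, ?_, ?_⟩
    · intro p
      have hpos : 0 < N := p.pos
      obtain ⟨m, hm⟩ := hgs ⟨0, (g p).pos⟩
      have hg0 : (g ⟨0, hpos⟩ : ℕ) = 0 := by
        have := hg (show (⟨0, hpos⟩ : Fin N) ≤ m from by rw [Fin.le_def]; simp)
        rw [hm, Fin.le_def] at this
        simpa using this
      have := F1 ⟨0, hpos⟩ p (by rw [Fin.le_def]; simp)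
      have hb0 := (Finset.mem_Icc.mp (hb1 ⟨0, hpos⟩)).1
      omega
    · intro p
      have hpos : 0 < N := p.pos
      have hJpos : 0 < J := (g p).pos
      set last : Fin N := ⟨N - 1, by omega⟩ with hlast
      obtain ⟨m, hm⟩ := hgs ⟨J - 1, by omega⟩
      have hglast : J - 1 ≤ (g last : ℕ) := by
        have := hg (show m ≤ last from by rw [Fin.le_def, hlast]; exact Nat.le_sub_one_of_lt m.isLt)
        rw [hm, Fin.le_def] at this
        simpa using this
      have h1 := F1 p last (by rw [Fin.le_def, hlast]; exact Nat.le_sub_one_of_lt p.isLt)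
      have h2 := (Finset.mem_Icc.mp (hb1 last)).2
      have h3 : (g last : ℕ) < J := (g last).isLt
      omega
  have hdstrict : ∀ b : Fin N → ℕ, b ∈ A →
      StrictMono (fun p : Fin N => b p + (p : ℕ) - ((g p : ℕ) + 1)) := by
    intro b hb p q hpq
    obtain ⟨F1, F2, _⟩ := hfacts b hb
    have h1 := F1 p q (le_of_lt hpq)
    have h2 := F2 p
    have h3 := F2 q
    rw [Fin.lt_def] at hpq
    dsimp only
    omega
  have hcard : A.card = ((Finset.range (k + N - J)).powersetCard N).card := by
    refine Finset.card_bij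
      (fun b _ => Finset.univ.image (fun p : Fin N => b p + (p : ℕ) - ((g p : ℕ) + 1)))
      ?_ ?_ ?_
    · -- maps into target
      intro b hb
      obtain ⟨F1, F2, F3⟩ := hfacts b hb
      rw [Finset.mem_powersetCard]
      constructor
      · intro x hx
        rcases Finset.mem_image.mp hx with ⟨p, _, rfl⟩
        rw [Finset.mem_range]
        have := F2 p
        have := F3 p
        have h4 := p.isLt
        have : (g p : ℕ) < J := (g p).isLt
        omega
      · rw [Finset.card_image_of_injective _ (hdstrict b hb).injective, Finset.card_univ,
          Fintype.card_fin]
    · -- injectivity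
      intro b hb b' hb' him
      have hdd : (fun p : Fin N => b p + (p : ℕ) - ((g p : ℕ) + 1)) =
          (fun p : Fin N => b' p + (p : ℕ) - ((g p : ℕ) + 1)) := by
        haveI : WellFoundedLT (Fin N) := inferInstance
        refine (StrictMono.range_inj (hdstrict b hb) (hdstrict b' hb')).mp ?_
        rw [← Set.image_univ, ← Set.image_univ, ← Finset.coe_univ, ← Finset.coe_image,
          ← Finset.coe_image, him]
      obtain ⟨_, F2, _⟩ := hfacts b hb
      obtain ⟨_, F2', _⟩ := hfacts b' hb'
      funext p
      have := congrFun hdd p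
      have := F2 p
      have := F2' p
      omega
    · -- surjectivity
      intro t ht
      rw [Finset.mem_powersetCard] at ht
      obtain ⟨hsub, hcardt⟩ := ht
      set e : Fin N ↪o ℕ := t.orderEmbOfFin hcardt with he
      have hestrict : StrictMono e := e.strictMono
      have hememt : ∀ p, e p ∈ t := fun p => Finset.orderEmbOfFin_mem t hcardt p
      have helt : ∀ p, e p < k + N - J := fun p => Finset.mem_range.mp (hsub (hememt p))
      have E1 : ∀ p q : Fin N, p ≤ q → e p + (q : ℕ) ≤ e q + (p : ℕ) := by
        refine step_le (fun p => e p) (fun p => (p : ℕ)) ?_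
        intro i h
        dsimp only
        have : e ⟨i, Nat.lt_of_succ_lt h⟩ < e ⟨i+1, h⟩ := by
          refine hestrict ?_
          rw [Fin.lt_def]; simp
        omega
      have hegep : ∀ p : Fin N, (p : ℕ) ≤ e p := by
        intro p
        have := E1 ⟨0, p.pos⟩ p (by rw [Fin.le_def]; simp)
        simp at this
        omega
      refine ⟨fun p => e p + (g p : ℕ) + 1 - (p : ℕ), ?_, ?_⟩
      · rw [hmemA]
        refine ⟨?_, ?_, ?_⟩
        · intro p
          rw [Finset.mem_Icc]
          have h1 := hegep p
          have hJpos : 0 < J := (g p).pos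
          set last : Fin N := ⟨N - 1, by omega⟩ with hlast
          have h2 := E1 p last (by rw [Fin.le_def, hlast]; exact Nat.le_sub_one_of_lt p.isLt)
          have h3 := helt last
          have h4 : (g p : ℕ) < J := (g p).isLt
          have h5 : (last : ℕ) = N - 1 := rfl
          have h6 := p.isLt
          omega
        · intro p q hpq
          have h1 := E1 p q hpq
          have h2 := hg hpq
          rw [Fin.le_def] at h2 hpq
          have := hegep p
          have := hegep q
          omega
        · intro p q hpq
          have hple : p ≤ q := by
            by_contra hc
            push_neg at hc
            exact absurd (hg (le_of_lt hc)) (not_le_of_gt hpq)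
          have h1 := E1 p q hple
          rw [Fin.lt_def] at hpq
          rw [Fin.le_def] at hple
          have := hegep p
          have := hegep q
          omega
      · have himeq : ∀ p : Fin N,
            (e p + (g p : ℕ) + 1 - (p : ℕ)) + (p : ℕ) - ((g p : ℕ) + 1) = e p := by
          intro p
          have := hegep p
          omega
        refine Finset.coe_injective ?_
        rw [Finset.coe_image, Finset.coe_univ, Set.image_univ]
        have hfeq : (fun p : Fin N =>
            (e p + (g p : ℕ) + 1 - (p : ℕ)) + (p : ℕ) - ((g p : ℕ) + 1)) = (e : Fin N → ℕ) :=
          funext himeq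
        rw [hfeq]
        exact Finset.range_orderEmbOfFin t hcardt
  rw [hcard, Finset.card_powersetCard, Finset.card_range]

theorem card_orderClass_interval {n j : ℕ} (Φc Φf : OSP n)
    (hc : Φc.length = j) (hf : Φf.length = n)
    (hsing : ∀ B ∈ Φf.blocks, B.card = 1)
    (href : Φf.refines Φc) (k : ℕ) :
    {a : Fin n → ℕ | (∀ i, a i ∈ Finset.Icc 1 k) ∧
        ∃ Φ : OSP n, Φ.delta a ∧ Φ.refines Φc ∧ Φf.refines Φ}.ncard
      = (k + n - j).choose n := by
  classical
  rw [OSP.length] at hc hf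
  obtain ⟨g, hgmono, hgblocks⟩ := href
  -- the singleton-block structure of Φf
  have hsing' : ∀ l : Fin Φf.blocks.length, ∃ x, Φf.blocks.get l = {x} := fun l =>
    Finset.card_eq_one.mp (hsing _ (List.get_mem _ l))
  choose f hfmem using hsing'
  have hmemf : ∀ (i : Fin n) (l : Fin Φf.blocks.length), i ∈ Φf.blocks.get l ↔ f l = i := by
    intro i l
    rw [hfmem l, Finset.mem_singleton, eq_comm]
  have hfinj : Function.Injective f := by
    intro l l' hll
    refine get_eq_of_mem_blocks Φf.pairwiseDisjoint ((hmemf _ _).mpr rfl) ?_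
    rw [hmemf]
    exact hll.symm
  have hfbij : Function.Bijective f := by
    rw [Fintype.bijective_iff_injective_and_card]
    refine ⟨hfinj, by rw [Fintype.card_fin, Fintype.card_fin, hf]⟩
  set e : Fin Φf.blocks.length ≃ Fin n := Equiv.ofBijective f hfbij with he
  have heapp : ∀ p, e p = f p := fun p => rfl
  have hesymm : ∀ i : Fin n, f (e.symm i) = i := fun i => e.apply_symm_apply i
  -- membership in blocks of Φc
  have hmemc : ∀ (y : Fin n) (l : Fin Φc.blocks.length),
      y ∈ Φc.blocks.get l ↔ g (e.symm y) = l := by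
    intro y l
    rw [hgblocks l, Finset.mem_biUnion]
    constructor
    · rintro ⟨m, hm, hy⟩
      rw [Finset.mem_filter] at hm
      rw [hmemf] at hy
      have : m = e.symm y := by
        apply hfinj
        rw [hy, hesymm]
      rw [← this]
      exact hm.2
    · intro hgl
      exact ⟨e.symm y, Finset.mem_filter.mpr ⟨Finset.mem_univ _, hgl⟩,
        (hmemf _ _).mpr (hesymm y)⟩
  -- surjectivity of g
  have hgsurj : Function.Surjective g := by
    intro l
    obtain ⟨y, hy⟩ := Φc.nonempty _ (List.get_mem Φc.blocks l)
    exact ⟨e.symm y, (hmemc y l).mp hy⟩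
  -- characterization of the set
  have hset : {a : Fin n → ℕ | (∀ i, a i ∈ Finset.Icc 1 k) ∧
      ∃ Φ : OSP n, Φ.delta a ∧ Φ.refines Φc ∧ Φf.refines Φ} =
      {a : Fin n → ℕ | (∀ i, a i ∈ Finset.Icc 1 k) ∧
        (∀ p q, p ≤ q → a (e p) ≤ a (e q)) ∧
        (∀ p q, g p < g q → a (e p) < a (e q))} := by
    ext a
    simp only [Set.mem_setOf_eq]
    constructor
    · rintro ⟨ha1, Φ, ⟨idx, hidx1, hidx2⟩, ⟨u, humono, hub⟩, ⟨h, hhmono, hhb⟩⟩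
      refine ⟨ha1, ?_, ?_⟩
      · -- monotonicity
        have hidxe : ∀ p, idx (f p) = h p := by
          intro p
          refine get_eq_of_mem_blocks Φ.pairwiseDisjoint (hidx1 (f p)) ?_
          rw [hhb (h p), Finset.mem_biUnion]
          exact ⟨p, Finset.mem_filter.mpr ⟨Finset.mem_univ _, rfl⟩, (hmemf _ _).mpr rfl⟩
        intro p q hpq
        rw [heapp, heapp, hidx2, hidxe, hidxe]
        exact hhmono hpq
      · -- strictness
        have hidxe : ∀ p, idx (f p) = h p := by
          intro p
          refine get_eq_of_mem_blocks Φ.pairwiseDisjoint (hidx1 (f p)) ?_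
          rw [hhb (h p), Finset.mem_biUnion]
          exact ⟨p, Finset.mem_filter.mpr ⟨Finset.mem_univ _, rfl⟩, (hmemf _ _).mpr rfl⟩
        have hug : ∀ p, u (h p) = g p := by
          intro p
          refine get_eq_of_mem_blocks (x := f p) Φc.pairwiseDisjoint ?_ ?_
          · rw [hub (u (h p)), Finset.mem_biUnion]
            refine ⟨h p, Finset.mem_filter.mpr ⟨Finset.mem_univ _, rfl⟩, ?_⟩
            rw [← hidxe p]
            exact hidx1 (f p)
          · rw [hgblocks (g p), Finset.mem_biUnion]
            exact ⟨p, Finset.mem_filter.mpr ⟨Finset.mem_univ _, rfl⟩, (hmemf _ _).mpr rfl⟩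
        intro p q hpq
        have hh : h p < h q := by
          by_contra hcon
          push_neg at hcon
          have := humono hcon
          rw [hug, hug] at this
          exact absurd this (not_le_of_gt hpq)
        have : ¬ (a (e q) ≤ a (e p)) := by
          rw [heapp, heapp, hidx2, hidxe, hidxe]
          rw [Fin.lt_def] at hh
          omega
        omega
    · rintro ⟨ha1, hmono, hstrict⟩
      obtain ⟨Φ, idx, hidx1, hidx2⟩ := exists_deltaOSP a
      have hmemΦ : ∀ (x : Fin n) (m : Fin Φ.blocks.length),
          x ∈ Φ.blocks.get m ↔ idx x = m := by
        intro x m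
        constructor
        · intro hx
          exact get_eq_of_mem_blocks Φ.pairwiseDisjoint (hidx1 x) hx
        · rintro rfl
          exact hidx1 x
      have hidxsurj : ∀ m : Fin Φ.blocks.length, ∃ x, idx x = m := by
        intro m
        obtain ⟨x, hx⟩ := Φ.nonempty _ (List.get_mem Φ.blocks m)
        exact ⟨x, (hmemΦ x m).mp hx⟩
      choose w hw using hidxsurj
      have hga : ∀ x y : Fin n, a x ≤ a y → g (e.symm x) ≤ g (e.symm y) := by
        intro x y hxy
        by_contra hcon
        push_neg at hcon
        have := hstrict _ _ hcon
        rw [e.apply_symm_apply, e.apply_symm_apply] at this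
        omega
      have haeq : ∀ x y : Fin n, a x = a y → idx x = idx y := by
        intro x y hxy
        have h1 := (hidx2 x y).mp (le_of_eq hxy)
        have h2 := (hidx2 y x).mp (le_of_eq hxy.symm)
        exact Fin.ext (le_antisymm h1 h2)
      refine ⟨ha1, Φ, ⟨idx, hidx1, hidx2⟩, ⟨fun m => g (e.symm (w m)), ?_, ?_⟩,
        ⟨fun p => idx (f p), ?_, ?_⟩⟩
      · -- u monotone
        intro m m' hmm
        refine hga _ _ ?_
        rw [hidx2, hw, hw]
        exact hmm
      · -- u blocks
        have hueq : ∀ x : Fin n, g (e.symm (w (idx x))) = g (e.symm x) := by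
          intro x
          have h1 : a (w (idx x)) = a x := by
            have h2 := hw (idx x)
            have h3 := (hidx2 (w (idx x)) x).mpr (by rw [h2])
            have h4 := (hidx2 x (w (idx x))).mpr (by rw [h2])
            omega
          exact le_antisymm (hga _ _ (le_of_eq h1)) (hga _ _ (le_of_eq h1.symm))
        intro l
        ext y
        rw [hmemc, Finset.mem_biUnion]
        constructor
        · intro hgl
          refine ⟨idx y, Finset.mem_filter.mpr ⟨Finset.mem_univ _, ?_⟩, hidx1 y⟩
          dsimp only
          rw [hueq y]
          exact hgl
        · rintro ⟨m, hm, hy⟩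
          rw [Finset.mem_filter] at hm
          rw [hmemΦ] at hy
          dsimp only at hm
          rw [← hm.2, ← hy]
          exact (hueq y).symm
      · -- h monotone
        intro p q hpq
        rw [Fin.le_def, ← hidx2]
        exact hmono p q hpq
      · -- h blocks
        intro m
        ext y
        rw [hmemΦ, Finset.mem_biUnion]
        constructor
        · intro hm
          refine ⟨e.symm y, Finset.mem_filter.mpr ⟨Finset.mem_univ _, ?_⟩,
            (hmemf _ _).mpr (hesymm y)⟩
          dsimp only
          rw [hesymm y]
          exact hm
        · rintro ⟨p, hp, hy⟩
          rw [Finset.mem_filter] at hp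
          rw [hmemf] at hy
          dsimp only at hp
          rw [← hy]
          exact hp.2
  rw [hset]
  -- transport along e
  set φ : (Fin Φf.blocks.length → ℕ) ≃ (Fin n → ℕ) := Equiv.arrowCongr e (Equiv.refl ℕ) with hφ
  have himg : {a : Fin n → ℕ | (∀ i, a i ∈ Finset.Icc 1 k) ∧
      (∀ p q, p ≤ q → a (e p) ≤ a (e q)) ∧
      (∀ p q, g p < g q → a (e p) < a (e q))} =
      φ '' {b : Fin Φf.blocks.length → ℕ | (∀ p, b p ∈ Finset.Icc 1 k) ∧
        (∀ p q : Fin Φf.blocks.length, p ≤ q → b p ≤ b q) ∧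
        (∀ p q : Fin Φf.blocks.length, g p < g q → b p < b q)} := by
    ext a
    rw [Set.mem_image_equiv]
    simp only [Set.mem_setOf_eq, hφ, Equiv.arrowCongr_symm, Equiv.arrowCongr_apply,
      Equiv.refl_symm, Equiv.coe_refl, Function.comp_apply, id_eq, Equiv.symm_symm]
    constructor
    · rintro ⟨h1, h2, h3⟩
      exact ⟨fun p => h1 (e p), h2, h3⟩
    · rintro ⟨h1, h2, h3⟩
      refine ⟨fun i => ?_, h2, h3⟩
      have := h1 (e.symm i)
      rwa [e.apply_symm_apply] at this
  rw [himg, Set.ncard_image_of_injective _ φ.injective,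
    count_main g hgmono hgsurj, hf, hc]
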